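/- arXiv:2408.13648 — 2 statements merged into one kernel-verified Lean document; each statement's English description precedes it below -/
import Mathlib

section
/- Suppose a distribution shift from a source joint distribution P_s(X,Y) to a target joint distribution P_t(X,Y) is ε-approximate label-preserving with respect to a measurable transformation T (meaning P_t(X) is the pushforward of P_s(X) under T, and for every x_s the total variation distance between P_t(Y | T(x_s)) and P_s(Y | x_s) is at most ε). Let L be a loss function with ‖L‖_∞ ≤ 1, let f be any measurable model, define the true target loss L_t = E_{P_t(X,Y)}[L(f(X), Y)] and the transport-estimated loss L̂_t = E_{P_s(X,Y)}[L(f(T(X)), Y)]. Then |L_t − L̂_t| ≤ 2ε. -/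
open MeasureTheory ProbabilityTheory

lemma integrable_of_bdd {α : Type*} [MeasurableSpace α] (μ : Measure α) [IsFiniteMeasure μ]
    {g : α → ℝ} (hg : Measurable g) (hb : ∀ y, |g y| ≤ 1) : Integrable g μ :=
  ⟨hg.aestronglyMeasurable, HasFiniteIntegral.of_bounded (C := 1) (ae_of_all _ fun y => by
    simpa [Real.norm_eq_abs] using hb y)⟩

lemma part_bound {Y : Type*} [MeasurableSpace Y]
    (ν₁ ν₂ : Measure Y) [IsFiniteMeasure ν₁] [IsFiniteMeasure ν₂]
    (hle : ν₂ ≤ ν₁)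
    (g : Y → ℝ) (hg : Measurable g) (hb : ∀ y, |g y| ≤ 1) :
    |∫ y, g y ∂ν₁ - ∫ y, g y ∂ν₂| ≤ (ν₁ Set.univ).toReal - (ν₂ Set.univ).toReal := by
  have h1 : ν₁ - ν₂ + ν₂ = ν₁ := Measure.sub_add_cancel_of_le hle
  have hint : ∀ (ν : Measure Y) [IsFiniteMeasure ν], Integrable g ν :=
    fun ν _ => integrable_of_bdd ν hg hb
  have h2 : ∫ y, g y ∂ν₁ = ∫ y, g y ∂(ν₁ - ν₂) + ∫ y, g y ∂ν₂ := by
    rw [← integral_add_measure (hint _) (hint _), h1]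
  rw [h2, add_sub_cancel_right]
  have h3 : ‖∫ y, g y ∂(ν₁ - ν₂)‖ ≤ 1 * ((ν₁ - ν₂) Set.univ).toReal :=
    norm_integral_le_of_norm_le_const (ae_of_all _ fun y => by
      simpa [Real.norm_eq_abs] using hb y)
  rw [Measure.sub_apply MeasurableSet.univ hle,
    ENNReal.toReal_sub_of_le (hle Set.univ) (measure_ne_top _ _)] at h3
  simpa [Real.norm_eq_abs] using h3

lemma tv_integral_bound {Y : Type*} [MeasurableSpace Y]
    (ν₁ ν₂ : Measure Y) [IsFiniteMeasure ν₁] [IsFiniteMeasure ν₂]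
    (g : Y → ℝ) (hg : Measurable g) (hb : ∀ y, |g y| ≤ 1)
    (ε : ℝ) (h : ∀ A : Set Y, MeasurableSet A → |(ν₁ A).toReal - (ν₂ A).toReal| ≤ ε) :
    |∫ y, g y ∂ν₁ - ∫ y, g y ∂ν₂| ≤ 2 * ε := by
  obtain ⟨S, hS, hS1, hS2⟩ := hahn_decomposition (μ := ν₁) (ν := ν₂)
  have hle₁ : ν₂.restrict S ≤ ν₁.restrict S := by
    refine Measure.le_iff.mpr fun s hs => ?_
    rw [Measure.restrict_apply hs, Measure.restrict_apply hs]
    exact hS1 _ (hs.inter hS) Set.inter_subset_right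
  have hle₂ : ν₁.restrict Sᶜ ≤ ν₂.restrict Sᶜ := by
    refine Measure.le_iff.mpr fun s hs => ?_
    rw [Measure.restrict_apply hs, Measure.restrict_apply hs]
    exact hS2 _ (hs.inter hS.compl) Set.inter_subset_right
  have hint : ∀ (ν : Measure Y) [IsFiniteMeasure ν], Integrable g ν :=
    fun ν _ => integrable_of_bdd ν hg hb
  have hdc₁ : ∫ y, g y ∂ν₁ = ∫ y, g y ∂(ν₁.restrict S) + ∫ y, g y ∂(ν₁.restrict Sᶜ) := by
    rw [← integral_add_measure (hint _) (hint _), Measure.restrict_add_restrict_compl hS]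
  have hdc₂ : ∫ y, g y ∂ν₂ = ∫ y, g y ∂(ν₂.restrict S) + ∫ y, g y ∂(ν₂.restrict Sᶜ) := by
    rw [← integral_add_measure (hint _) (hint _), Measure.restrict_add_restrict_compl hS]
  have b₁ := part_bound (ν₁.restrict S) (ν₂.restrict S) hle₁ g hg hb
  have b₂ := part_bound (ν₂.restrict Sᶜ) (ν₁.restrict Sᶜ) hle₂ g hg hb
  rw [Measure.restrict_apply_univ, Measure.restrict_apply_univ] at b₁ b₂
  have hb₁ : (ν₁ S).toReal - (ν₂ S).toReal ≤ ε := (le_abs_self _).trans (h S hS)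
  have hb₂ : (ν₂ Sᶜ).toReal - (ν₁ Sᶜ).toReal ≤ ε := by
    have := h Sᶜ hS.compl
    rw [abs_sub_comm] at this
    exact (le_abs_self _).trans this
  calc |∫ y, g y ∂ν₁ - ∫ y, g y ∂ν₂|
      = |(∫ y, g y ∂(ν₁.restrict S) - ∫ y, g y ∂(ν₂.restrict S)) +
          (∫ y, g y ∂(ν₁.restrict Sᶜ) - ∫ y, g y ∂(ν₂.restrict Sᶜ))| := by
        rw [hdc₁, hdc₂]; ring_nf
    _ ≤ |∫ y, g y ∂(ν₁.restrict S) - ∫ y, g y ∂(ν₂.restrict S)| +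
          |∫ y, g y ∂(ν₁.restrict Sᶜ) - ∫ y, g y ∂(ν₂.restrict Sᶜ)| := abs_add_le _ _
    _ ≤ ε + ε := by
        refine add_le_add (b₁.trans hb₁) ?_
        rw [abs_sub_comm]
        exact b₂.trans hb₂
    _ = 2 * ε := by ring

/-- If a distribution shift is ε-approximate label-preserving with respect to a measurable
transformation `T`, the transport-estimated loss is within `2ε` of the true target loss. -/
theorem performance_estimation_error_le {Xs Xt Y Z : Type*}
    [MeasurableSpace Xs] [MeasurableSpace Xt] [MeasurableSpace Y] [MeasurableSpace Z]
    (μs : Measure Xs) (μt : Measure Xt)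
    [IsProbabilityMeasure μs] [IsProbabilityMeasure μt]
    (κs : Kernel Xs Y) (κt : Kernel Xt Y) [IsMarkovKernel κs] [IsMarkovKernel κt]
    (T : Xs → Xt) (hT : Measurable T) (hpush : μs.map T = μt)
    (f : Xt → Z) (hf : Measurable f)
    (L : Z → Y → ℝ) (hL : Measurable (Function.uncurry L))
    (hLbound : ∀ z y, |L z y| ≤ 1)
    (ε : ℝ) (hε : 0 ≤ ε)
    (hlabel : ∀ x : Xs, ∀ A : Set Y, MeasurableSet A →
      |(κt (T x) A).toReal - (κs x A).toReal| ≤ ε) :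
    |(∫ p, L (f p.1) p.2 ∂(μt.compProd κt)) -
      (∫ p, L (f (T p.1)) p.2 ∂(μs.compProd κs))| ≤ 2 * ε := by
  have hmeas_t : Measurable fun p : Xt × Y => L (f p.1) p.2 :=
    hL.comp ((hf.comp measurable_fst).prodMk measurable_snd)
  have hmeas_s : Measurable fun p : Xs × Y => L (f (T p.1)) p.2 :=
    hL.comp ((hf.comp (hT.comp measurable_fst)).prodMk measurable_snd)
  have hint_t : Integrable (fun p : Xt × Y => L (f p.1) p.2) (μt.compProd κt) :=
    integrable_of_bdd _ hmeas_t fun p => hLbound _ _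
  have hint_s : Integrable (fun p : Xs × Y => L (f (T p.1)) p.2) (μs.compProd κs) :=
    integrable_of_bdd _ hmeas_s fun p => hLbound _ _
  rw [Measure.integral_compProd hint_t, Measure.integral_compProd hint_s]
  have hF : StronglyMeasurable fun x : Xt => ∫ y, L (f x) y ∂κt x :=
    hmeas_t.stronglyMeasurable.integral_kernel_prod_right'
  rw [← hpush, integral_map hT.aemeasurable hF.aestronglyMeasurable]
  have hG : StronglyMeasurable fun x : Xs => ∫ y, L (f (T x)) y ∂κs x :=
    hmeas_s.stronglyMeasurable.integral_kernel_prod_right'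
  have hinner : ∀ (ν : Measure Y) [IsProbabilityMeasure ν] (z : Z), |∫ y, L z y ∂ν| ≤ 1 := by
    intro ν _ z
    have := norm_integral_le_of_norm_le_const (μ := ν) (f := fun y => L z y) (C := 1)
      (ae_of_all _ fun y => by simpa [Real.norm_eq_abs] using hLbound z y)
    simpa [Real.norm_eq_abs] using this
  have hintF : Integrable (fun x => ∫ y, L (f (T x)) y ∂κt (T x)) μs :=
    integrable_of_bdd _ (hF.measurable.comp hT) fun x => hinner _ _
  have hintG : Integrable (fun x => ∫ y, L (f (T x)) y ∂κs x) μs :=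
    integrable_of_bdd _ hG.measurable fun x => hinner _ _
  rw [← integral_sub hintF hintG]
  have hbd : ∀ x : Xs,
      |(∫ y, L (f (T x)) y ∂κt (T x)) - ∫ y, L (f (T x)) y ∂κs x| ≤ 2 * ε := fun x =>
    tv_integral_bound (κt (T x)) (κs x) (fun y => L (f (T x)) y)
      (hL.comp (measurable_const.prodMk measurable_id)) (fun y => hLbound _ _) ε (hlabel x)
  have := norm_integral_le_of_norm_le_const (μ := μs)
    (f := fun x => (∫ y, L (f (T x)) y ∂κt (T x)) - ∫ y, L (f (T x)) y ∂κs x) (C := 2 * ε)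
    (ae_of_all _ fun x => by simpa [Real.norm_eq_abs] using hbd x)
  simpa [Real.norm_eq_abs] using this
end

section
/- If the loss function takes values in [0, 1] and the shift is ε-approximate label preserving with respect to T, then the estimated accuracy obtained via label transport differs from the true target accuracy by at most 2ε; in particular, if the true target loss exceeds the source loss by more than 4ε, the transport-estimated loss also exceeds the source loss (i.e., a genuine degradation of magnitude greater than 4ε is always detected up to 2ε error). -/
open MeasureTheory ProbabilityTheory

private lemma integrable_of_bdd_one {α : Type*} [MeasurableSpace α] (μ : Measure α)
    [IsFiniteMeasure μ] {g : α → ℝ} (hg : AEStronglyMeasurable g μ)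
    (hb : ∀ a, |g a| ≤ 1) : Integrable g μ :=
  ⟨hg, HasFiniteIntegral.of_bounded (C := 1) (Filter.Eventually.of_forall fun a => by
    simpa [Real.norm_eq_abs] using hb a)⟩

private lemma layer_props {Y : Type*} [MeasurableSpace Y] (ρ : Measure Y)
    [IsProbabilityMeasure ρ] (g : Y → ℝ) :
    Measurable (fun t : ℝ => (ρ {a | t < g a}).toReal) ∧
    IntegrableOn (fun t : ℝ => (ρ {a | t < g a}).toReal) (Set.Ioc 0 1) volume := by
  have hanti : Antitone fun t : ℝ => (ρ {a | t < g a}).toReal := fun s t hst =>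
    ENNReal.toReal_mono (measure_ne_top ρ _) (measure_mono fun a ha => lt_of_le_of_lt hst ha)
  have hmeas := hanti.measurable
  refine ⟨hmeas, ?_⟩
  refine Measure.integrableOn_of_bounded (M := 1) (by simp) hmeas.aestronglyMeasurable ?_
  refine Filter.Eventually.of_forall fun t => ?_
  rw [Real.norm_eq_abs, abs_of_nonneg ENNReal.toReal_nonneg]
  simpa using ENNReal.toReal_mono (measure_ne_top ρ Set.univ) (measure_mono (Set.subset_univ _))

/-- Total-variation style bound: if two probability measures differ by at most `ε` on every
measurable set, then integrals of a `[0,1]`-valued measurable function differ by at most `ε`. -/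
private lemma tv_integral_diff_le {Y : Type*} [MeasurableSpace Y]
    (μ ν : Measure Y) [IsProbabilityMeasure μ] [IsProbabilityMeasure ν]
    {g : Y → ℝ} (hg : Measurable g) (hg01 : ∀ y, g y ∈ Set.Icc (0:ℝ) 1)
    {ε : ℝ}
    (h : ∀ A : Set Y, MeasurableSet A → |(μ A).toReal - (ν A).toReal| ≤ ε) :
    |(∫ y, g y ∂μ) - (∫ y, g y ∂ν)| ≤ ε := by
  have hb : ∀ y, |g y| ≤ 1 := fun y => abs_le.mpr ⟨by linarith [(hg01 y).1], (hg01 y).2⟩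
  have intμ : Integrable g μ := integrable_of_bdd_one μ hg.aestronglyMeasurable hb
  have intν : Integrable g ν := integrable_of_bdd_one ν hg.aestronglyMeasurable hb
  have nnμ : 0 ≤ᵐ[μ] g := Filter.Eventually.of_forall fun y => (hg01 y).1
  have nnν : 0 ≤ᵐ[ν] g := Filter.Eventually.of_forall fun y => (hg01 y).1
  have hvan : ∀ t : ℝ, t ∈ Set.Ioi (1:ℝ) → {a | t < g a} = (∅ : Set Y) := by
    intro t ht
    ext a
    simp only [Set.mem_setOf_eq, Set.mem_empty_iff_false, iff_false, not_lt]
    exact le_trans (hg01 a).2 (le_of_lt ht)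
  -- split the layer-cake integral and drop the vanishing tail
  have split : ∀ ρ : Measure Y, ∀ _ : IsProbabilityMeasure ρ,
      ∫ t in Set.Ioi (0:ℝ), (ρ {a | t < g a}).toReal
        = ∫ t in Set.Ioc (0:ℝ) 1, (ρ {a | t < g a}).toReal := by
    intro ρ hρ
    obtain ⟨hmeas, hint⟩ := layer_props ρ g
    have hEq : Set.EqOn (fun t : ℝ => (ρ {a | t < g a}).toReal) (fun _ => (0:ℝ))
        (Set.Ioi 1) := by
      intro t ht
      simp [hvan t ht]
    have hint2 : IntegrableOn (fun t : ℝ => (ρ {a | t < g a}).toReal) (Set.Ioi 1) volume := by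
      rw [integrableOn_congr_fun hEq measurableSet_Ioi]
      exact integrableOn_zero
    rw [← Set.Ioc_union_Ioi_eq_Ioi (zero_le_one (α := ℝ)),
      setIntegral_union (Set.Ioc_disjoint_Ioi le_rfl) measurableSet_Ioi hint hint2,
      setIntegral_congr_fun measurableSet_Ioi hEq]
    simp
  rw [intμ.integral_eq_integral_meas_lt nnμ, intν.integral_eq_integral_meas_lt nnν]
  simp only [Measure.real]
  rw [split μ inferInstance, split ν inferInstance,
    ← integral_sub (layer_props μ g).2 (layer_props ν g).2]
  have hvol : volume (Set.Ioc (0:ℝ) 1) < ⊤ := by simp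
  have := norm_setIntegral_le_of_norm_le_const (μ := volume) (s := Set.Ioc (0:ℝ) 1)
    (f := fun t => (μ {a | t < g a}).toReal - (ν {a | t < g a}).toReal) (C := ε)
    hvol (fun t _ => by
      rw [Real.norm_eq_abs]
      exact h _ (hg measurableSet_Ioi))
  simpa [Real.norm_eq_abs, Measure.real] using this

/-- With a `[0,1]`-valued loss and an ε-approximate label-preserving shift, the
transport-estimated loss differs from the true target loss by at most `2ε`; in particular,
a genuine degradation of magnitude greater than `4ε` is detected up to `2ε` error. -/
theorem degradation_detection {X Y Z : Type*}
    [MeasurableSpace X] [MeasurableSpace Y] [MeasurableSpace Z]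
    (μs : Measure X) (μt : Measure X)
    [IsProbabilityMeasure μs] [IsProbabilityMeasure μt]
    (κs : Kernel X Y) (κt : Kernel X Y) [IsMarkovKernel κs] [IsMarkovKernel κt]
    (T : X → X) (hT : Measurable T) (hpush : μs.map T = μt)
    (f : X → Z) (hf : Measurable f)
    (L : Z → Y → ℝ) (hL : Measurable (Function.uncurry L))
    (hLbound : ∀ z y, L z y ∈ Set.Icc (0 : ℝ) 1)
    (ε : ℝ) (hε : 0 ≤ ε)
    (hlabel : ∀ x : X, ∀ A : Set Y, MeasurableSet A →
      |(κt (T x) A).toReal - (κs x A).toReal| ≤ ε) :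
    |(∫ p, L (f p.1) p.2 ∂(μt.compProd κt)) -
      (∫ p, L (f (T p.1)) p.2 ∂(μs.compProd κs))| ≤ 2 * ε ∧
    ((∫ p, L (f p.1) p.2 ∂(μt.compProd κt)) -
        (∫ p, L (f p.1) p.2 ∂(μs.compProd κs)) > 4 * ε →
      (∫ p, L (f (T p.1)) p.2 ∂(μs.compProd κs)) -
        (∫ p, L (f p.1) p.2 ∂(μs.compProd κs)) > 2 * ε) := by
  have hb : ∀ z y, |L z y| ≤ 1 := fun z y =>
    abs_le.mpr ⟨by linarith [(hLbound z y).1], (hLbound z y).2⟩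
  have hm1 : Measurable fun p : X × Y => L (f p.1) p.2 :=
    hL.comp ((hf.comp measurable_fst).prodMk measurable_snd)
  have hm2 : Measurable fun p : X × Y => L (f (T p.1)) p.2 :=
    hL.comp ((hf.comp (hT.comp measurable_fst)).prodMk measurable_snd)
  have int1 : Integrable (fun p : X × Y => L (f p.1) p.2) (μt.compProd κt) :=
    integrable_of_bdd_one _ hm1.aestronglyMeasurable fun p => hb _ _
  have int2 : Integrable (fun p : X × Y => L (f (T p.1)) p.2) (μs.compProd κs) :=
    integrable_of_bdd_one _ hm2.aestronglyMeasurable fun p => hb _ _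
  -- inner integrals
  have hgtm : Measurable fun x => ∫ y, L (f x) y ∂(κt x) :=
    (hm1.stronglyMeasurable.integral_kernel_prod_right').measurable
  have hgsm : Measurable fun x => ∫ y, L (f (T x)) y ∂(κs x) :=
    (hm2.stronglyMeasurable.integral_kernel_prod_right').measurable
  have hgt_bd : ∀ x : X, |∫ y, L (f x) y ∂(κt x)| ≤ 1 := fun x => by
    have := norm_integral_le_of_norm_le_const (μ := κt x) (f := fun y => L (f x) y) (C := 1)
      (Filter.Eventually.of_forall fun y => by rw [Real.norm_eq_abs]; exact hb _ y)
    simpa [Real.norm_eq_abs] using this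
  have hgs_bd : ∀ x : X, |∫ y, L (f (T x)) y ∂(κs x)| ≤ 1 := fun x => by
    have := norm_integral_le_of_norm_le_const (μ := κs x) (f := fun y => L (f (T x)) y) (C := 1)
      (Filter.Eventually.of_forall fun y => by rw [Real.norm_eq_abs]; exact hb _ y)
    simpa [Real.norm_eq_abs] using this
  have intgt : Integrable (fun x => ∫ y, L (f (T x)) y ∂(κt (T x))) μs :=
    integrable_of_bdd_one _ (hgtm.comp hT).aestronglyMeasurable fun x => hgt_bd (T x)
  have intgs : Integrable (fun x => ∫ y, L (f (T x)) y ∂(κs x)) μs :=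
    integrable_of_bdd_one _ hgsm.aestronglyMeasurable fun x => hgs_bd x
  have hA : (∫ p, L (f p.1) p.2 ∂(μt.compProd κt))
      = ∫ x, ∫ y, L (f (T x)) y ∂(κt (T x)) ∂μs := by
    rw [Measure.integral_compProd int1, ← hpush,
      integral_map hT.aemeasurable hgtm.aestronglyMeasurable]
  have hB : (∫ p, L (f (T p.1)) p.2 ∂(μs.compProd κs))
      = ∫ x, ∫ y, L (f (T x)) y ∂(κs x) ∂μs := Measure.integral_compProd int2
  have key : ∀ x : X, |(∫ y, L (f (T x)) y ∂(κt (T x))) - ∫ y, L (f (T x)) y ∂(κs x)| ≤ ε := by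
    intro x
    exact tv_integral_diff_le (κt (T x)) (κs x)
      (hL.comp (measurable_const.prodMk measurable_id))
      (fun y => hLbound _ y) (fun A hA => hlabel x A hA)
  have h1 : |(∫ p, L (f p.1) p.2 ∂(μt.compProd κt)) -
      (∫ p, L (f (T p.1)) p.2 ∂(μs.compProd κs))| ≤ 2 * ε := by
    rw [hA, hB, ← integral_sub intgt intgs]
    have := norm_integral_le_of_norm_le_const (μ := μs)
      (f := fun x => (∫ y, L (f (T x)) y ∂(κt (T x))) - ∫ y, L (f (T x)) y ∂(κs x)) (C := ε)
      (Filter.Eventually.of_forall fun x => by rw [Real.norm_eq_abs]; exact key x)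
    rw [Real.norm_eq_abs] at this
    simp only [probReal_univ, mul_one] at this
    linarith
  refine ⟨h1, fun hgap => ?_⟩
  have h2 := abs_le.mp h1
  linarith [h2.2]
end
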